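/- Monotone tail summation (Corollary proof step, $N=2$ case): let $P(x_1,x_2)=e^{-t(v_1+v_2)}v_1^{x_1-y_1}v_2^{x_2-y_2}\det\begin{pmatrix}F_{1,1}(x_1-y_1,t)&F_{1,2}(x_2-y_1,t)\\F_{2,1}(x_1-y_2,t)&F_{2,2}(x_2-y_2,t)\end{pmatrix}$. Then for $z_1<z_2$, $\sum_{x_2=z_2}^{\infty}\sum_{x_1=z_1}^{x_2-1}P(x_1,x_2)= e^{-t(v_1+v_2)}v_1^{z_1-y_1}v_2^{z_2-y_2}\det\begin{pmatrix}F_{1,2}(z_1-y_1,t)&F_{1,3}(z_2-y_1,t)\\F_{2,2}(z_1-y_2,t)&F_{2,3}(z_2-y_2,t)\end{pmatrix}$, the double series converging absolutely. -/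

import Mathlib

open Finset

/-- The contour-integral function `F_{k,l}(x,t)` of Rákos–Schütz:
`F_{k,l}(x,t) = (2πi)⁻¹ ∮ e^{t/z} z^{x-1} ∏_{i=1}^{l-1}(1 - v_i z)⁻¹ ∏_{i=1}^{k-1}(1 - v_i z) dz`
along a circle of radius `ε` around the origin.  The rates are `v 1, v 2, …`. -/
noncomputable def F (v : ℕ → ℝ) (ε : ℝ) (k l : ℕ) (x : ℤ) (t : ℝ) : ℂ :=
  (2 * Real.pi * Complex.I)⁻¹ *
    (∮ z in C(0, ε), Complex.exp ((t : ℂ) / z) * z ^ (x - 1) *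
      (∏ i ∈ range (l - 1), (1 - (v (i + 1) : ℂ) * z)⁻¹) *
      ∏ i ∈ range (k - 1), (1 - (v (i + 1) : ℂ) * z))

/-- The two-particle conditional probability determinant. -/
noncomputable def P2 (v : ℕ → ℝ) (ε : ℝ) (y₁ y₂ x₁ x₂ : ℤ) (t : ℝ) : ℂ :=
  Complex.exp (-(t * (v 1 + v 2) : ℝ)) * (v 1 : ℂ) ^ (x₁ - y₁) * (v 2 : ℂ) ^ (x₂ - y₂) *
    Matrix.det !![F v ε 1 1 (x₁ - y₁) t, F v ε 1 2 (x₂ - y₁) t;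
                  F v ε 2 1 (x₁ - y₂) t, F v ε 2 2 (x₂ - y₂) t]

set_option linter.unusedSectionVars false
set_option linter.unusedVariables false
open Filter

namespace TailAux

/-- The integrand of `F`. -/
noncomputable def G (v : ℕ → ℝ) (t : ℝ) (k l : ℕ) (x : ℤ) : ℂ → ℂ := fun z =>
  Complex.exp ((t : ℂ) / z) * z ^ (x - 1) *
    (∏ i ∈ range (l - 1), (1 - (v (i + 1) : ℂ) * z)⁻¹) *
    ∏ i ∈ range (k - 1), (1 - (v (i + 1) : ℂ) * z)

lemma F_eq (v : ℕ → ℝ) (ε : ℝ) (k l : ℕ) (x : ℤ) (t : ℝ) :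
    F v ε k l x t = (2 * Real.pi * Complex.I)⁻¹ * ∮ z in C(0, ε), G v t k l x z := rfl

/-- Hypothesis bundle. -/
structure Hyp (v : ℕ → ℝ) (vmax ε t : ℝ) : Prop where
  hv : ∀ i, 0 < v i
  hvm : ∀ i, v i ≤ vmax
  hε : 0 < ε
  hεm : ε < 1 / vmax
  ht : 0 ≤ t

namespace Hyp

variable {v : ℕ → ℝ} {vmax ε t : ℝ} (H : Hyp v vmax ε t)
include H

lemma hvmax : 0 < vmax := lt_of_lt_of_le (H.hv 1) (H.hvm 1)

lemma hme : vmax * ε < 1 := by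
  have h := H.hvmax
  calc vmax * ε < vmax * (1 / vmax) := mul_lt_mul_of_pos_left H.hεm h
  _ = 1 := by field_simp

lemma hviε (i : ℕ) : v i * ε < 1 :=
  lt_of_le_of_lt (mul_le_mul_of_nonneg_right (H.hvm i) H.hε.le) H.hme

lemma sphere_norm {z : ℂ} (hz : z ∈ Metric.sphere (0:ℂ) ε) : ‖z‖ = ε := by
  simpa using hz

lemma sphere_ne_zero {z : ℂ} (hz : z ∈ Metric.sphere (0:ℂ) ε) : z ≠ 0 := by
  intro h
  have := H.sphere_norm hz
  rw [h] at this
  simp at this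
  exact absurd this.symm (ne_of_gt H.hε)

lemma norm_one_sub_ge {z : ℂ} (hz : z ∈ Metric.sphere (0:ℂ) ε) (i : ℕ) :
    1 - vmax * ε ≤ ‖(1 - (v i : ℂ) * z)‖ := by
  have h1 : ‖(v i : ℂ) * z‖ = v i * ε := by
    rw [norm_mul, H.sphere_norm hz, Complex.norm_real, Real.norm_eq_abs, abs_of_pos (H.hv i)]
  have h2 : v i * ε ≤ vmax * ε := mul_le_mul_of_nonneg_right (H.hvm i) H.hε.le
  calc 1 - vmax * ε ≤ 1 - ‖(v i : ℂ) * z‖ := by rw [h1]; linarith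
  _ ≤ ‖(1 - (v i : ℂ) * z)‖ := by
      have := norm_sub_norm_le (1:ℂ) ((v i : ℂ) * z)
      simpa using this

lemma one_sub_ne {z : ℂ} (hz : z ∈ Metric.sphere (0:ℂ) ε) (i : ℕ) :
    (1 - (v i : ℂ) * z) ≠ 0 := by
  intro h
  have := H.norm_one_sub_ge hz i
  rw [h] at this
  simp at this
  have := H.hme
  linarith

lemma norm_one_sub_le {z : ℂ} (hz : z ∈ Metric.sphere (0:ℂ) ε) (i : ℕ) :
    ‖(1 - (v i : ℂ) * z)‖ ≤ 1 + vmax * ε := by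
  have h1 : ‖(v i : ℂ) * z‖ = v i * ε := by
    rw [norm_mul, H.sphere_norm hz, Complex.norm_real, Real.norm_eq_abs, abs_of_pos (H.hv i)]
  have h2 : v i * ε ≤ vmax * ε := mul_le_mul_of_nonneg_right (H.hvm i) H.hε.le
  calc ‖(1 - (v i : ℂ) * z)‖ ≤ ‖(1:ℂ)‖ + ‖(v i : ℂ) * z‖ := by
        simpa [sub_eq_add_neg] using norm_add_le (1:ℂ) (-((v i : ℂ) * z))
  _ ≤ 1 + vmax * ε := by rw [norm_one, h1]; linarith


lemma contG (k l : ℕ) (x : ℤ) : ContinuousOn (G v t k l x) (Metric.sphere (0:ℂ) ε) := by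
  unfold G
  apply ContinuousOn.mul
  apply ContinuousOn.mul
  apply ContinuousOn.mul
  · exact (continuousOn_const.div continuousOn_id (fun z hz => H.sphere_ne_zero hz)).cexp
  · exact continuousOn_id.zpow₀ _ (fun z hz => Or.inl (H.sphere_ne_zero hz))
  · exact continuousOn_finset_prod _ fun i _ =>
      (continuousOn_const.sub (continuousOn_const.mul continuousOn_id)).inv₀
        (fun z hz => H.one_sub_ne hz _)
  · exact continuousOn_finset_prod _ fun i _ =>
      continuousOn_const.sub (continuousOn_const.mul continuousOn_id)

lemma intG (k l : ℕ) (x : ℤ) : CircleIntegrable (G v t k l x) 0 ε :=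
  (H.contG k l x).circleIntegrable H.hε.le

lemma intG' (a : ℂ) (k l : ℕ) (x : ℤ) :
    CircleIntegrable (fun z => a * G v t k l x z) 0 ε :=
  (continuousOn_const.mul (H.contG k l x)).circleIntegrable H.hε.le

end Hyp

/-- Uniform constant in the bound for `F`. -/
noncomputable def M (vmax ε t : ℝ) (k l : ℕ) : ℝ :=
  Real.exp (t / ε) * ((1 - vmax * ε)⁻¹) ^ (l - 1) * (1 + vmax * ε) ^ (k - 1)

namespace Hyp

variable {v : ℕ → ℝ} {vmax ε t : ℝ} (H : Hyp v vmax ε t)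
include H

lemma M_nonneg (k l : ℕ) : 0 ≤ M vmax ε t k l := by
  have h1 : (0:ℝ) < 1 - vmax * ε := by have := H.hme; linarith
  have h2 : (0:ℝ) < 1 + vmax * ε := by
    have := mul_pos H.hvmax H.hε; linarith
  unfold M
  positivity

lemma normG_le (k l : ℕ) (x : ℤ) {z : ℂ} (hz : z ∈ Metric.sphere (0:ℂ) ε) :
    ‖G v t k l x z‖ ≤ M vmax ε t k l * ε ^ (x - 1) := by
  have h1 : (0:ℝ) < 1 - vmax * ε := by have := H.hme; linarith
  have hz0 := H.sphere_ne_zero hz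
  have hzε := H.sphere_norm hz
  have e1 : ‖Complex.exp ((t : ℂ) / z)‖ ≤ Real.exp (t / ε) := by
    rw [Complex.norm_exp]
    apply Real.exp_le_exp.mpr
    have hre : ((t:ℂ)/z).re ≤ ‖(t:ℂ)/z‖ := Complex.re_le_norm _
    have : ‖(t:ℂ)/z‖ = t / ε := by
      rw [norm_div, hzε, Complex.norm_real, Real.norm_eq_abs, abs_of_nonneg H.ht]
    linarith
  have e2 : ‖z ^ (x - 1)‖ = ε ^ (x - 1) := by
    rw [norm_zpow, hzε]
  have e3 : ‖∏ i ∈ range (l - 1), (1 - (v (i + 1) : ℂ) * z)⁻¹‖ ≤ ((1 - vmax * ε)⁻¹) ^ (l - 1) := by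
    rw [norm_prod]
    calc ∏ i ∈ range (l - 1), ‖(1 - (v (i + 1) : ℂ) * z)⁻¹‖
        ≤ ∏ _i ∈ range (l - 1), (1 - vmax * ε)⁻¹ := by
          apply Finset.prod_le_prod (fun i _ => norm_nonneg _)
          intro i _
          rw [norm_inv]
          apply inv_anti₀ h1
          simpa using H.norm_one_sub_ge hz (i+1)
      _ = ((1 - vmax * ε)⁻¹) ^ (l - 1) := by simp
  have e4 : ‖∏ i ∈ range (k - 1), (1 - (v (i + 1) : ℂ) * z)‖ ≤ (1 + vmax * ε) ^ (k - 1) := by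
    rw [norm_prod]
    calc ∏ i ∈ range (k - 1), ‖(1 - (v (i + 1) : ℂ) * z)‖
        ≤ ∏ _i ∈ range (k - 1), (1 + vmax * ε) := by
          apply Finset.prod_le_prod (fun i _ => norm_nonneg _)
          intro i _
          simpa using H.norm_one_sub_le hz (i+1)
      _ = (1 + vmax * ε) ^ (k - 1) := by simp
  unfold G M
  have hεx : (0:ℝ) ≤ ε ^ (x - 1) := le_of_lt (zpow_pos H.hε _)
  calc ‖Complex.exp ((t : ℂ) / z) * z ^ (x - 1) *
      (∏ i ∈ range (l - 1), (1 - (v (i + 1) : ℂ) * z)⁻¹) *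
      ∏ i ∈ range (k - 1), (1 - (v (i + 1) : ℂ) * z)‖
      = ‖Complex.exp ((t : ℂ) / z)‖ * ‖z ^ (x - 1)‖ *
        ‖∏ i ∈ range (l - 1), (1 - (v (i + 1) : ℂ) * z)⁻¹‖ *
        ‖∏ i ∈ range (k - 1), (1 - (v (i + 1) : ℂ) * z)‖ := by
        simp [norm_mul]
    _ ≤ Real.exp (t / ε) * ε ^ (x - 1) * ((1 - vmax * ε)⁻¹) ^ (l - 1) *
        (1 + vmax * ε) ^ (k - 1) := by
        have h3 : (0:ℝ) ≤ ((1 - vmax * ε)⁻¹) ^ (l - 1) := by positivity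
        apply mul_le_mul _ e4 (norm_nonneg _) (by positivity)
        apply mul_le_mul _ e3 (norm_nonneg _) (by positivity)
        rw [e2]
        exact mul_le_mul_of_nonneg_right e1 hεx
    _ = Real.exp (t / ε) * ((1 - vmax * ε)⁻¹) ^ (l - 1) * (1 + vmax * ε) ^ (k - 1) *
        ε ^ (x - 1) := by ring

lemma normF_le (k l : ℕ) (x : ℤ) :
    ‖F v ε k l x t‖ ≤ M vmax ε t k l * ε ^ x := by
  rw [F_eq]
  have key : ‖((2 * (Real.pi:ℂ) * Complex.I)⁻¹) • ∮ z in C(0, ε), G v t k l x z‖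
      ≤ ε * (M vmax ε t k l * ε ^ (x-1)) :=
    circleIntegral.norm_two_pi_i_inv_smul_integral_le_of_norm_le_const H.hε.le
      (fun z hz => H.normG_le k l x hz)
  rw [smul_eq_mul] at key
  calc ‖(2 * (Real.pi:ℂ) * Complex.I)⁻¹ * ∮ z in C(0, ε), G v t k l x z‖
      ≤ ε * (M vmax ε t k l * ε ^ (x-1)) := by exact_mod_cast key
    _ = M vmax ε t k l * ε ^ x := by
        rw [zpow_sub_one₀ (ne_of_gt H.hε)]
        rw [show ε * (M vmax ε t k l * (ε ^ x * ε⁻¹)) = M vmax ε t k l * ε ^ x * (ε * ε⁻¹) by ring,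
          mul_inv_cancel₀ (ne_of_gt H.hε), mul_one]

/-- The key telescoping identity. -/
lemma key_identity (k l : ℕ) (hl : 1 ≤ l) (x : ℤ) :
    (v l : ℂ) ^ x * F v ε k l x t
      = (v l : ℂ) ^ x * F v ε k (l+1) x t - (v l : ℂ) ^ (x+1) * F v ε k (l+1) (x+1) t := by
  obtain ⟨m, rfl⟩ := Nat.exists_eq_add_of_le hl
  set l := 1 + m with hldef
  rw [F_eq, F_eq, F_eq]
  have hsmul : ∀ (a : ℂ) (n : ℕ) (y : ℤ),
      a * ((2 * (Real.pi:ℂ) * Complex.I)⁻¹ * ∮ z in C(0, ε), G v t k n y z)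
      = (2 * (Real.pi:ℂ) * Complex.I)⁻¹ * ∮ z in C(0, ε), a * G v t k n y z := by
    intro a n y
    calc a * ((2 * (Real.pi:ℂ) * Complex.I)⁻¹ * ∮ z in C(0, ε), G v t k n y z)
        = (2 * (Real.pi:ℂ) * Complex.I)⁻¹ * (a • ∮ z in C(0, ε), G v t k n y z) := by
          rw [smul_eq_mul]; ring
      _ = (2 * (Real.pi:ℂ) * Complex.I)⁻¹ * ∮ z in C(0, ε), a • G v t k n y z := by
          rw [circleIntegral.integral_smul]
      _ = (2 * (Real.pi:ℂ) * Complex.I)⁻¹ * ∮ z in C(0, ε), a * G v t k n y z := by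
          simp [smul_eq_mul]
  rw [hsmul, hsmul, hsmul, ← mul_sub, ← circleIntegral.integral_sub
    (H.intG' _ k (l+1) x) (H.intG' _ k (l+1) (x+1))]
  congr 1
  apply circleIntegral.integral_congr H.hε.le
  intro z hz
  have hz0 := H.sphere_ne_zero hz
  have hw : (1 - (v l : ℂ) * z) ≠ 0 := H.one_sub_ne hz l
  have hvne : ((v l : ℂ)) ≠ 0 := by
    exact_mod_cast ne_of_gt (H.hv l)
  simp only [G]
  have hprod : ∏ i ∈ range (l + 1 - 1), (1 - (v (i + 1) : ℂ) * z)⁻¹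
      = (∏ i ∈ range (l - 1), (1 - (v (i + 1) : ℂ) * z)⁻¹) * (1 - (v l : ℂ) * z)⁻¹ := by
    have h1 : l + 1 - 1 = (l - 1) + 1 := by omega
    have h2 : l - 1 + 1 = l := by omega
    rw [h1, Finset.prod_range_succ, h2]
  rw [hprod]
  have hzp : z ^ (x + 1 - 1) = z ^ (x - 1) * z := by
    rw [show x + 1 - 1 = (x - 1) + 1 by ring, zpow_add_one₀ hz0]
  have hvp : (v l : ℂ) ^ (x + 1) = (v l : ℂ) ^ x * (v l : ℂ) := by
    rw [zpow_add_one₀ hvne]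
  rw [hzp, hvp]
  have hP : (∏ i ∈ range (l - 1), (1 - (v (i + 1) : ℂ) * z)) ≠ 0 := by
    apply Finset.prod_ne_zero_iff.mpr
    intro i _
    exact H.one_sub_ne hz _
  have hinv : (1 - (v l : ℂ) * z)⁻¹ * (1 - (v l : ℂ) * z) = 1 := inv_mul_cancel₀ hw
  linear_combination (-((v l : ℂ) ^ x * Complex.exp ((t : ℂ) / z) * z ^ (x - 1) *
    (∏ i ∈ range (l - 1), (1 - (v (i + 1) : ℂ) * z)⁻¹) *
    ∏ i ∈ range (k - 1), (1 - (v (i + 1) : ℂ) * z))) * hinv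

end Hyp

/-- Telescoping a finite sum over an integer interval. -/
lemma sum_Ico_telescope (g : ℤ → ℂ) (a b : ℤ) (hab : a ≤ b) :
    ∑ x ∈ Finset.Ico a b, (g x - g (x+1)) = g a - g b := by
  have key : ∀ n : ℕ, ∑ x ∈ Finset.Ico a (a + n), (g x - g (x+1)) = g a - g (a + n) := by
    intro n
    induction n with
    | zero => simp
    | succ n ih =>
        have h1 : a ≤ a + (n:ℤ) := by omega
        have h3 : (a:ℤ) + ((n:ℕ)+1 : ℕ) = (a + n) + 1 := by push_cast; ring
        rw [h3, ← Finset.Ico_union_Ico_eq_Ico h1 (by omega : a + (n:ℤ) ≤ a + (n:ℤ) + 1),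
          Finset.sum_union (Finset.Ico_disjoint_Ico_consecutive _ _ _), ih]
        have h4 : Finset.Ico (a + (n:ℤ)) (a + (n:ℤ) + 1) = {a + (n:ℤ)} := by
          ext m; simp; omega
        rw [h4, Finset.sum_singleton]
        ring
  have hb : b = a + ((b - a).toNat : ℤ) := by omega
  rw [hb]
  exact key _

/-- Telescoping an infinite sum. -/
lemma hasSum_telescope (g : ℤ → ℂ) (a : ℤ)
    (hsum : Summable (fun n : ℕ => g (a + n) - g (a + n + 1)))
    (hdecay : Tendsto (fun n : ℕ => g (a + n)) atTop (nhds 0)) :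
    HasSum (fun n : ℕ => g (a + n) - g (a + n + 1)) (g a) := by
  have h := hsum.hasSum
  have h2 := h.tendsto_sum_nat
  have h3 : ∀ N : ℕ, ∑ n ∈ range N, (g (a + n) - g (a + n + 1)) = g a - g (a + N) := by
    intro N
    have := Finset.sum_range_sub' (f := fun n : ℕ => g (a + n)) N
    simpa [add_assoc] using this
  have h4 : Tendsto (fun N : ℕ => ∑ n ∈ range N, (g (a + n) - g (a + n + 1))) atTop
      (nhds (g a)) := by
    simp only [h3]
    have h5 : Tendsto (fun _ : ℕ => g a) atTop (nhds (g a)) := tendsto_const_nhds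
    simpa using h5.sub hdecay
  have := tendsto_nhds_unique h2 h4
  rwa [this] at h

namespace Hyp

variable {v : ℕ → ℝ} {vmax ε t : ℝ} (H : Hyp v vmax ε t)
include H

lemma norm_vF_le (k l' : ℕ) (i : ℕ) (b : ℤ) :
    ‖(v i:ℂ)^b * F v ε k l' b t‖ ≤ M vmax ε t k l' * (v i * ε)^b := by
  rw [norm_mul, norm_zpow, Complex.norm_real, Real.norm_eq_abs, abs_of_pos (H.hv i),
    mul_zpow]
  calc (v i)^b * ‖F v ε k l' b t‖ ≤ (v i)^b * (M vmax ε t k l' * ε ^ b) :=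
        mul_le_mul_of_nonneg_left (H.normF_le k l' b) (zpow_pos (H.hv i) b).le
    _ = M vmax ε t k l' * ((v i)^b * ε^b) := by ring

lemma vε_mem (i : ℕ) : 0 < v i * ε ∧ v i * ε < 1 :=
  ⟨mul_pos (H.hv i) H.hε, H.hviε i⟩

/-- Finite telescoping sum of `v_l^{x-y} F_{k,l}(x-y)`. -/
lemma sum_Ico_geomF (k l : ℕ) (hl : 1 ≤ l) (y a b : ℤ) (hab : a ≤ b) :
    ∑ x ∈ Finset.Ico a b, (v l:ℂ)^(x - y) * F v ε k l (x - y) t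
      = (v l:ℂ)^(a - y) * F v ε k (l+1) (a - y) t
        - (v l:ℂ)^(b - y) * F v ε k (l+1) (b - y) t := by
  have hts := sum_Ico_telescope (fun x => (v l:ℂ)^(x - y) * F v ε k (l+1) (x - y) t) a b hab
  rw [← hts]
  apply Finset.sum_congr rfl
  intro x _
  have h := H.key_identity k l hl (x - y)
  have e1 : x - y + 1 = x + 1 - y := by ring
  rw [h, e1]

/-- Infinite telescoping sum of `v_l^{x-y} F_{k,l}(x-y)` for `x = a, a+1, …`. -/
lemma hasSum_geomF (k l : ℕ) (hl : 1 ≤ l) (y a : ℤ) :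
    HasSum (fun n : ℕ => (v l:ℂ)^((a + n) - y) * F v ε k l ((a + n) - y) t)
      ((v l:ℂ)^(a - y) * F v ε k (l+1) (a - y) t) := by
  obtain ⟨hr0, hr1⟩ := H.vε_mem l
  set r := v l * ε with hrdef
  have hbound : ∀ (l' : ℕ) (n : ℕ), ‖(v l:ℂ)^((a + n) - y) * F v ε k l' ((a + n) - y) t‖
      ≤ (M vmax ε t k l' * r^(a - y)) * r^(n:ℕ) := by
    intro l' n
    have h := H.norm_vF_le k l' l ((a + n) - y)
    calc ‖(v l:ℂ)^((a + n) - y) * F v ε k l' ((a + n) - y) t‖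
        ≤ M vmax ε t k l' * r^((a + n) - y) := h
      _ = (M vmax ε t k l' * r^(a - y)) * r^(n:ℕ) := by
          rw [show ((a + n) - y : ℤ) = (a - y) + (n:ℤ) by ring,
            zpow_add₀ (ne_of_gt hr0), zpow_natCast]
          ring
  have hgeo : Summable (fun n : ℕ => (M vmax ε t k l * r^(a - y)) * r^n) :=
    (summable_geometric_of_lt_one hr0.le hr1).mul_left _
  have hsum : Summable (fun n : ℕ => (v l:ℂ)^((a + n) - y) * F v ε k l ((a + n) - y) t) :=
    Summable.of_norm_bounded hgeo (hbound l)
  -- telescoping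
  set g : ℤ → ℂ := fun x => (v l:ℂ)^(x - y) * F v ε k (l+1) (x - y) t with hgdef
  have hterm : ∀ x : ℤ, (v l:ℂ)^(x - y) * F v ε k l (x - y) t = g x - g (x+1) := by
    intro x
    have h := H.key_identity k l hl (x - y)
    have e1 : x - y + 1 = x + 1 - y := by ring
    rw [h, e1]
  have hdecay : Tendsto (fun n : ℕ => g (a + n)) atTop (nhds 0) := by
    apply squeeze_zero_norm (fun n => hbound (l+1) n)
    have := (tendsto_pow_atTop_nhds_zero_of_lt_one hr0.le hr1).const_mul
      (M vmax ε t k (l+1) * r^(a - y))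
    simpa using this
  have hsum' : Summable (fun n : ℕ => g (a + n) - g (a + n + 1)) :=
    Summable.congr hsum (fun n => hterm (a + n))
  have hfe : (fun n : ℕ => (v l:ℂ)^((a + n) - y) * F v ε k l ((a + n) - y) t)
      = fun n : ℕ => g (a + n) - g (a + n + 1) := funext fun n => hterm (a + n)
  rw [hfe]
  exact hasSum_telescope g a hsum' hdecay

omit H in
/-- Expansion of the 2×2 determinant. -/
lemma P2_expand (v : ℕ → ℝ) (ε : ℝ) (y₁ y₂ x₁ x₂ : ℤ) (t : ℝ) :
    P2 v ε y₁ y₂ x₁ x₂ t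
      = Complex.exp (-(t * (v 1 + v 2) : ℝ)) * (v 1 : ℂ) ^ (x₁ - y₁) * (v 2 : ℂ) ^ (x₂ - y₂) *
        (F v ε 1 1 (x₁ - y₁) t * F v ε 2 2 (x₂ - y₂) t
          - F v ε 1 2 (x₂ - y₁) t * F v ε 2 1 (x₁ - y₂) t) := by
  rw [P2, Matrix.det_fin_two_of]

lemma inner_sum (y₁ y₂ z₁ x₂ : ℤ) (h1 : z₁ ≤ x₂) :
    ∑ x₁ ∈ Finset.Ico z₁ x₂, P2 v ε y₁ y₂ x₁ x₂ t
      = Complex.exp (-(t * (v 1 + v 2) : ℝ)) * (v 1:ℂ)^(z₁ - y₁) * (v 2:ℂ)^(x₂ - y₂) *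
        (F v ε 1 2 (z₁ - y₁) t * F v ε 2 2 (x₂ - y₂) t
          - F v ε 2 2 (z₁ - y₂) t * F v ε 1 2 (x₂ - y₁) t) := by
  have hv1 : ((v 1 : ℝ) : ℂ) ≠ 0 := by exact_mod_cast ne_of_gt (H.hv 1)
  have hz : ∀ m : ℤ, ((v 1 : ℝ) : ℂ)^m ≠ 0 := fun m => zpow_ne_zero m hv1
  have hsplit : ∀ x₁ : ℤ, P2 v ε y₁ y₂ x₁ x₂ t
      = (Complex.exp (-(t * (v 1 + v 2) : ℝ)) * (v 2:ℂ)^(x₂-y₂) * F v ε 2 2 (x₂-y₂) t)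
          * ((v 1:ℂ)^(x₁-y₁) * F v ε 1 1 (x₁-y₁) t)
        - (Complex.exp (-(t * (v 1 + v 2) : ℝ)) * (v 2:ℂ)^(x₂-y₂) * F v ε 1 2 (x₂-y₁) t
            * (v 1:ℂ)^(y₂-y₁))
          * ((v 1:ℂ)^(x₁-y₂) * F v ε 2 1 (x₁-y₂) t) := by
    intro x₁
    rw [P2_expand]
    have e : (v 1:ℂ)^(y₂-y₁) * (v 1:ℂ)^(x₁-y₂) = (v 1:ℂ)^(x₁-y₁) := by
      rw [← zpow_add₀ hv1]; congr 1; ring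
    linear_combination (Complex.exp (-(t * (v 1 + v 2) : ℝ)) * (v 2:ℂ)^(x₂-y₂)
      * F v ε 1 2 (x₂-y₁) t * F v ε 2 1 (x₁-y₂) t) * e
  rw [Finset.sum_congr rfl (fun x₁ _ => hsplit x₁), Finset.sum_sub_distrib,
    ← Finset.mul_sum, ← Finset.mul_sum,
    H.sum_Ico_geomF 1 1 le_rfl y₁ z₁ x₂ h1, H.sum_Ico_geomF 2 1 le_rfl y₂ z₁ x₂ h1]
  have e1 : (v 1:ℂ)^(y₂-y₁) * (v 1:ℂ)^(z₁-y₂) = (v 1:ℂ)^(z₁-y₁) := by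
    rw [← zpow_add₀ hv1]; congr 1; ring
  have e2 : (v 1:ℂ)^(y₂-y₁) * (v 1:ℂ)^(x₂-y₂) = (v 1:ℂ)^(x₂-y₁) := by
    rw [← zpow_add₀ hv1]; congr 1; ring
  linear_combination (-(Complex.exp (-(t * (v 1 + v 2) : ℝ)) * (v 2:ℂ)^(x₂-y₂)
      * F v ε 1 2 (x₂-y₁) t * F v ε 2 2 (z₁-y₂) t)) * e1
    + (Complex.exp (-(t * (v 1 + v 2) : ℝ)) * (v 2:ℂ)^(x₂-y₂)
      * F v ε 2 2 (x₂-y₂) t * F v ε 1 2 (x₂-y₁) t) * e2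

lemma outer_sum (y₁ y₂ z₁ z₂ : ℤ) :
    HasSum (fun n : ℕ =>
      Complex.exp (-(t * (v 1 + v 2) : ℝ)) * (v 1:ℂ)^(z₁ - y₁) * (v 2:ℂ)^((z₂ + n) - y₂) *
        (F v ε 1 2 (z₁ - y₁) t * F v ε 2 2 ((z₂ + n) - y₂) t
          - F v ε 2 2 (z₁ - y₂) t * F v ε 1 2 ((z₂ + n) - y₁) t))
      (Complex.exp (-(t * (v 1 + v 2) : ℝ)) * (v 1:ℂ)^(z₁ - y₁) * (v 2:ℂ)^(z₂ - y₂) *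
        (F v ε 1 2 (z₁ - y₁) t * F v ε 2 3 (z₂ - y₂) t
          - F v ε 2 2 (z₁ - y₂) t * F v ε 1 3 (z₂ - y₁) t)) := by
  have hv2 : ((v 2 : ℝ) : ℂ) ≠ 0 := by exact_mod_cast ne_of_gt (H.hv 2)
  have hz : ∀ m : ℤ, ((v 2 : ℝ) : ℂ)^m ≠ 0 := fun m => zpow_ne_zero m hv2
  have h1 := H.hasSum_geomF 2 2 (by norm_num) y₂ z₂
  have h2 := H.hasSum_geomF 1 2 (by norm_num) y₁ z₂
  set E := Complex.exp (-(t * (v 1 + v 2) : ℝ)) with hE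
  set c₁ : ℂ := E * (v 1:ℂ)^(z₁ - y₁) * F v ε 1 2 (z₁ - y₁) t with hc₁
  set c₂ : ℂ := E * (v 1:ℂ)^(z₁ - y₁) * F v ε 2 2 (z₁ - y₂) t * (v 2:ℂ)^(y₁ - y₂) with hc₂
  have hcomb := (h1.mul_left c₁).sub (h2.mul_left c₂)
  have hfe : (fun n : ℕ =>
      E * (v 1:ℂ)^(z₁ - y₁) * (v 2:ℂ)^((z₂ + n) - y₂) *
        (F v ε 1 2 (z₁ - y₁) t * F v ε 2 2 ((z₂ + n) - y₂) t
          - F v ε 2 2 (z₁ - y₂) t * F v ε 1 2 ((z₂ + n) - y₁) t))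
      = fun n : ℕ => c₁ * ((v 2:ℂ)^((z₂ + n) - y₂) * F v ε 2 2 ((z₂ + n) - y₂) t)
        - c₂ * ((v 2:ℂ)^((z₂ + n) - y₁) * F v ε 1 2 ((z₂ + n) - y₁) t) := by
    funext n
    rw [hc₁, hc₂]
    have e3 : (v 2:ℂ)^(y₁-y₂) * (v 2:ℂ)^((z₂+(n:ℤ))-y₁) = (v 2:ℂ)^((z₂+(n:ℤ))-y₂) := by
      rw [← zpow_add₀ hv2]; congr 1; ring
    linear_combination (E * (v 1:ℂ)^(z₁ - y₁) * F v ε 2 2 (z₁ - y₂) t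
      * F v ε 1 2 ((z₂ + n) - y₁) t) * e3
  have hve : E * (v 1:ℂ)^(z₁ - y₁) * (v 2:ℂ)^(z₂ - y₂) *
        (F v ε 1 2 (z₁ - y₁) t * F v ε 2 3 (z₂ - y₂) t
          - F v ε 2 2 (z₁ - y₂) t * F v ε 1 3 (z₂ - y₁) t)
      = c₁ * ((v 2:ℂ)^(z₂ - y₂) * F v ε 2 3 (z₂ - y₂) t)
        - c₂ * ((v 2:ℂ)^(z₂ - y₁) * F v ε 1 3 (z₂ - y₁) t) := by
    rw [hc₁, hc₂]
    have e4 : (v 2:ℂ)^(y₁-y₂) * (v 2:ℂ)^(z₂-y₁) = (v 2:ℂ)^(z₂-y₂) := by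
      rw [← zpow_add₀ hv2]; congr 1; ring
    linear_combination (E * (v 1:ℂ)^(z₁ - y₁) * F v ε 2 2 (z₁ - y₂) t
      * F v ε 1 3 (z₂ - y₁) t) * e4
  rw [hfe, hve]
  exact hcomb

lemma normP2_le (y₁ y₂ : ℤ) : ∃ C : ℝ, 0 ≤ C ∧ ∀ x₁ x₂ : ℤ,
    ‖P2 v ε y₁ y₂ x₁ x₂ t‖ ≤ C * ((v 1 * ε)^x₁ * (v 2 * ε)^x₂) := by
  have hv1 := H.hv 1
  have hv2 := H.hv 2
  have hε := H.hε
  have hM11 := H.M_nonneg 1 1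
  have hM22 := H.M_nonneg 2 2
  have hM12 := H.M_nonneg 1 2
  have hM21 := H.M_nonneg 2 1
  set M11 := M vmax ε t 1 1
  set M22 := M vmax ε t 2 2
  set M12 := M vmax ε t 1 2
  set M21 := M vmax ε t 2 1
  set K := Real.exp (-(t * (v 1 + v 2)))
  have hK : 0 ≤ K := Real.exp_nonneg _
  refine ⟨K * (M11*M22 * ((v 1)^(-y₁)*ε^(-y₁)*(v 2)^(-y₂)*ε^(-y₂))
    + M12*M21 * ((v 1)^(-y₁)*ε^(-y₂)*(v 2)^(-y₂)*ε^(-y₁))), ?_, ?_⟩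
  · have h1 : (0:ℝ) ≤ (v 1)^(-y₁)*ε^(-y₁)*(v 2)^(-y₂)*ε^(-y₂) := by positivity
    have h2 : (0:ℝ) ≤ (v 1)^(-y₁)*ε^(-y₂)*(v 2)^(-y₂)*ε^(-y₁) := by positivity
    have := add_nonneg (mul_nonneg (mul_nonneg hM11 hM22) h1)
      (mul_nonneg (mul_nonneg hM12 hM21) h2)
    exact mul_nonneg hK this
  intro x₁ x₂
  have hnorm : ∀ (i : ℕ) (m : ℤ), ‖((v i : ℝ) : ℂ)^m‖ = (v i)^m := by
    intro i m
    rw [norm_zpow, Complex.norm_real, Real.norm_eq_abs, abs_of_pos (H.hv i)]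
  have hE : ‖Complex.exp (-(t * (v 1 + v 2) : ℝ) : ℂ)‖ = K := by
    have : ((-(t * (v 1 + v 2) : ℝ) : ℝ) : ℂ) = (-(t * (v 1 + v 2) : ℝ) : ℂ) := by push_cast; ring
    rw [← this, Complex.norm_exp_ofReal]
  calc ‖P2 v ε y₁ y₂ x₁ x₂ t‖
      = K * ((v 1)^(x₁-y₁) * ((v 2)^(x₂-y₂) *
        ‖F v ε 1 1 (x₁ - y₁) t * F v ε 2 2 (x₂ - y₂) t
          - F v ε 1 2 (x₂ - y₁) t * F v ε 2 1 (x₁ - y₂) t‖)) := by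
        rw [P2_expand, norm_mul, norm_mul, norm_mul, hE, hnorm 1, hnorm 2]
        ring
    _ ≤ K * ((v 1)^(x₁-y₁) * ((v 2)^(x₂-y₂) *
        (M11*ε^(x₁-y₁)*(M22*ε^(x₂-y₂)) + M12*ε^(x₂-y₁)*(M21*ε^(x₁-y₂))))) := by
        apply mul_le_mul_of_nonneg_left _ hK
        apply mul_le_mul_of_nonneg_left _ (zpow_pos hv1 _).le
        apply mul_le_mul_of_nonneg_left _ (zpow_pos hv2 _).le
        calc ‖F v ε 1 1 (x₁ - y₁) t * F v ε 2 2 (x₂ - y₂) t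
            - F v ε 1 2 (x₂ - y₁) t * F v ε 2 1 (x₁ - y₂) t‖
            ≤ ‖F v ε 1 1 (x₁ - y₁) t * F v ε 2 2 (x₂ - y₂) t‖
              + ‖F v ε 1 2 (x₂ - y₁) t * F v ε 2 1 (x₁ - y₂) t‖ := norm_sub_le _ _
          _ ≤ M11*ε^(x₁-y₁)*(M22*ε^(x₂-y₂)) + M12*ε^(x₂-y₁)*(M21*ε^(x₁-y₂)) := by
              apply add_le_add
              · rw [norm_mul]
                exact mul_le_mul (H.normF_le 1 1 _) (H.normF_le 2 2 _) (norm_nonneg _)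
                  (by positivity)
              · rw [norm_mul]
                exact mul_le_mul (H.normF_le 1 2 _) (H.normF_le 2 1 _) (norm_nonneg _)
                  (by positivity)
    _ = (K * (M11*M22 * ((v 1)^(-y₁)*ε^(-y₁)*(v 2)^(-y₂)*ε^(-y₂))
        + M12*M21 * ((v 1)^(-y₁)*ε^(-y₂)*(v 2)^(-y₂)*ε^(-y₁))))
        * ((v 1 * ε)^x₁ * (v 2 * ε)^x₂) := by
        have hs : ∀ (r : ℝ), r ≠ 0 → ∀ a b : ℤ, r^(a-b) = r^a * r^(-b) := by
          intro r hr a b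
          rw [sub_eq_add_neg, zpow_add₀ hr]
        simp only [hs (v 1) (ne_of_gt hv1), hs (v 2) (ne_of_gt hv2),
          hs ε (ne_of_gt hε), mul_zpow]
        ring

end Hyp

/-- Summability of indicator geometric on ℤ. -/
lemma summable_indic (r : ℝ) (h0 : 0 < r) (h1 : r < 1) (a : ℤ) :
    Summable (fun x : ℤ => if a ≤ x then r^x else 0) := by
  set f : ℤ → ℝ := fun x => if a ≤ x then r^x else 0 with hf
  have hi : Function.Injective (fun n : ℕ => a + (n:ℤ)) := by
    intro m n h; simpa using h
  have hz : ∀ x ∉ Set.range (fun n : ℕ => a + (n:ℤ)), f x = 0 := by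
    intro x hx
    have : ¬ a ≤ x := by
      intro hax
      exact hx ⟨(x - a).toNat, by simp; omega⟩
    simp [hf, this]
  rw [← Function.Injective.summable_iff hi hz]
  have : (f ∘ fun n : ℕ => a + (n:ℤ)) = fun n : ℕ => r^a * r^n := by
    funext n
    simp only [Function.comp, hf, if_pos (by omega : a ≤ a + (n:ℤ))]
    rw [zpow_add₀ (ne_of_gt h0), zpow_natCast]
  rw [this]
  exact (summable_geometric_of_lt_one h0.le h1).mul_left _

end TailAux

open TailAux

set_option maxHeartbeats 2000000 in
theorem tail_summation_two_particles
    (v : ℕ → ℝ) (vmax : ℝ) (hv : ∀ i, 0 < v i) (hvm : ∀ i, v i ≤ vmax)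
    (ε : ℝ) (hε : 0 < ε) (hεm : ε < 1 / vmax)
    (y₁ y₂ : ℤ) (hy : y₁ < y₂) (z₁ z₂ : ℤ) (hz : z₁ < z₂) (t : ℝ) (ht : 0 ≤ t) :
    HasSum
      (fun p : {p : ℤ × ℤ // z₁ ≤ p.1 ∧ z₂ ≤ p.2 ∧ p.1 < p.2} =>
        P2 v ε y₁ y₂ p.1.1 p.1.2 t)
      (Complex.exp (-(t * (v 1 + v 2) : ℝ)) * (v 1 : ℂ) ^ (z₁ - y₁) * (v 2 : ℂ) ^ (z₂ - y₂) *
        Matrix.det !![F v ε 1 2 (z₁ - y₁) t, F v ε 1 3 (z₂ - y₁) t;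
                      F v ε 2 2 (z₁ - y₂) t, F v ε 2 3 (z₂ - y₂) t]) := by
  classical
  have H : TailAux.Hyp v vmax ε t := ⟨hv, hvm, hε, hεm, ht⟩
  set S : Set (ℤ × ℤ) := {p : ℤ × ℤ | z₁ ≤ p.1 ∧ z₂ ≤ p.2 ∧ p.1 < p.2} with hS
  set f : ℤ × ℤ → ℂ := S.indicator (fun p => P2 v ε y₁ y₂ p.1 p.2 t) with hfdef
  set T : ℂ := Complex.exp (-(t * (v 1 + v 2) : ℝ)) * (v 1:ℂ)^(z₁ - y₁) * (v 2:ℂ)^(z₂ - y₂) *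
    (F v ε 1 2 (z₁ - y₁) t * F v ε 2 3 (z₂ - y₂) t
      - F v ε 2 2 (z₁ - y₂) t * F v ε 1 3 (z₂ - y₁) t) with hT
  have htarget : (Complex.exp (-(t * (v 1 + v 2) : ℝ)) * (v 1 : ℂ) ^ (z₁ - y₁)
      * (v 2 : ℂ) ^ (z₂ - y₂) *
      Matrix.det !![F v ε 1 2 (z₁ - y₁) t, F v ε 1 3 (z₂ - y₁) t;
                    F v ε 2 2 (z₁ - y₂) t, F v ε 2 3 (z₂ - y₂) t]) = T := by
    rw [Matrix.det_fin_two_of, hT]; ring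
  rw [htarget]
  have hsub : HasSum ((fun p : ℤ × ℤ => P2 v ε y₁ y₂ p.1 p.2 t) ∘ ((↑) : S → ℤ × ℤ)) T
      ↔ HasSum f T :=
    hasSum_subtype_iff_indicator
  rw [show (fun p : {p : ℤ × ℤ // z₁ ≤ p.1 ∧ z₂ ≤ p.2 ∧ p.1 < p.2} =>
      P2 v ε y₁ y₂ p.1.1 p.1.2 t)
    = (fun p : ℤ × ℤ => P2 v ε y₁ y₂ p.1 p.2 t) ∘ ((↑) : S → ℤ × ℤ) from rfl]
  refine hsub.mpr ?_
  set fs : ℤ × ℤ → ℂ := fun q => f (q.2, q.1) with hfs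
  have hswap : HasSum fs T ↔ HasSum f T := by
    have hfe : fs = f ∘ ⇑(Equiv.prodComm ℤ ℤ) := rfl
    rw [hfe]
    exact (Equiv.prodComm ℤ ℤ).hasSum_iff
  rw [← hswap]
  obtain ⟨C, hC0, hC⟩ := H.normP2_le y₁ y₂
  have hr1 := H.vε_mem 1
  have hr2 := H.vε_mem 2
  have c1 : ∀ x : ℤ, (0:ℝ) ≤ (if z₁ ≤ x then (v 1 * ε)^x else 0) := by
    intro x
    split
    · exact zpow_nonneg hr1.1.le _
    · exact le_rfl
  have c2 : ∀ x : ℤ, (0:ℝ) ≤ (if z₂ ≤ x then (v 2 * ε)^x else 0) := by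
    intro x
    split
    · exact zpow_nonneg hr2.1.le _
    · exact le_rfl
  have hsum_f : Summable f := by
    apply Summable.of_norm_bounded (g := fun p : ℤ × ℤ =>
      C * ((if z₁ ≤ p.1 then (v 1 * ε)^p.1 else 0) * (if z₂ ≤ p.2 then (v 2 * ε)^p.2 else 0)))
    · exact ((summable_indic _ hr1.1 hr1.2 z₁).mul_of_nonneg
        (summable_indic _ hr2.1 hr2.2 z₂) c1 c2).mul_left C
    · intro p
      by_cases hp : p ∈ S
      · rw [hfdef, Set.indicator_of_mem hp, if_pos hp.1, if_pos hp.2.1]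
        exact hC p.1 p.2
      · rw [hfdef, Set.indicator_of_notMem hp]
        simp only [norm_zero]
        exact mul_nonneg hC0 (mul_nonneg (c1 p.1) (c2 p.2))
  have hsum_fs : Summable fs := by
    have hfe : fs = f ∘ ⇑(Equiv.prodComm ℤ ℤ) := rfl
    rw [hfe]
    exact (Equiv.prodComm ℤ ℤ).summable_iff.mpr hsum_f
  set g : ℤ → ℂ := fun x₂ => if z₂ ≤ x₂ then
    Complex.exp (-(t * (v 1 + v 2) : ℝ)) * (v 1:ℂ)^(z₁ - y₁) * (v 2:ℂ)^(x₂ - y₂) *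
      (F v ε 1 2 (z₁ - y₁) t * F v ε 2 2 (x₂ - y₂) t
        - F v ε 2 2 (z₁ - y₂) t * F v ε 1 2 (x₂ - y₁) t) else 0 with hg
  have hfib : ∀ x₂ : ℤ, HasSum (fun x₁ => fs (x₂, x₁)) (g x₂) := by
    intro x₂
    by_cases h2 : z₂ ≤ x₂
    · have hzx : z₁ ≤ x₂ := le_trans (le_of_lt hz) h2
      have hni : ∀ x₁ ∉ Finset.Ico z₁ x₂, fs (x₂, x₁) = 0 := by
        intro x₁ hx₁
        rw [hfs]
        simp only [hfdef]
        apply Set.indicator_of_notMem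
        intro hmem
        obtain ⟨a1, _, a3⟩ := hmem
        simp only [Finset.mem_Ico, not_and, not_lt] at hx₁
        have := hx₁ a1
        omega
      have hhs := hasSum_sum_of_ne_finset_zero (L := SummationFilter.unconditional ℤ) hni
      have hsum_eq : ∑ x₁ ∈ Finset.Ico z₁ x₂, fs (x₂, x₁)
          = ∑ x₁ ∈ Finset.Ico z₁ x₂, P2 v ε y₁ y₂ x₁ x₂ t := by
        apply Finset.sum_congr rfl
        intro x₁ hx₁
        rw [hfs]
        simp only [hfdef]
        apply Set.indicator_of_mem
        simp only [Finset.mem_Ico] at hx₁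
        exact ⟨hx₁.1, h2, hx₁.2⟩
      rw [hsum_eq, H.inner_sum y₁ y₂ z₁ x₂ hzx] at hhs
      rw [hg]
      simp only [if_pos h2]
      exact hhs
    · have hall : ∀ x₁ : ℤ, fs (x₂, x₁) = 0 := by
        intro x₁
        rw [hfs]
        simp only [hfdef]
        apply Set.indicator_of_notMem
        intro hmem
        exact h2 hmem.2.1
      rw [hg]
      simp only [if_neg h2]
      have : (fun x₁ : ℤ => fs (x₂, x₁)) = fun _ => (0:ℂ) := funext hall
      rw [this]
      exact hasSum_zero
  have houter : HasSum g T := by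
    have hi : Function.Injective (fun n : ℕ => z₂ + (n:ℤ)) := fun m n h => by simpa using h
    have hz0 : ∀ x ∉ Set.range (fun n : ℕ => z₂ + (n:ℤ)), g x = 0 := by
      intro x hx
      have : ¬ z₂ ≤ x := fun hle => hx ⟨(x - z₂).toNat, by simp; omega⟩
      rw [hg]
      simp only [if_neg this]
    rw [← Function.Injective.hasSum_iff hi hz0]
    have he : (g ∘ fun n : ℕ => z₂ + (n:ℤ)) = (fun n : ℕ =>
        Complex.exp (-(t * (v 1 + v 2) : ℝ)) * (v 1:ℂ)^(z₁ - y₁) * (v 2:ℂ)^((z₂ + n) - y₂) *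
          (F v ε 1 2 (z₁ - y₁) t * F v ε 2 2 ((z₂ + n) - y₂) t
            - F v ε 2 2 (z₁ - y₂) t * F v ε 1 2 ((z₂ + n) - y₁) t)) := by
      funext n
      simp only [Function.comp, hg, if_pos (by omega : z₂ ≤ z₂ + (n:ℤ))]
    rw [he, hT]
    exact H.outer_sum y₁ y₂ z₁ z₂
  have h1 : HasSum fs (∑' p, fs p) := hsum_fs.hasSum
  have h2 : HasSum g (∑' p, fs p) := h1.prod_fiberwise hfib
  rw [houter.unique h2]
  exact h1
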